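/- Let L be a κ×κ column-stochastic primitive matrix and M = L - I_κ. Then every column of the adjugate matrix M* is nonzero. -/

import Mathlib

open Matrix Finset

/-- Powers of a column-stochastic matrix are column-stochastic. -/
lemma colsum_pow_aux {κ : ℕ} (L : Matrix (Fin κ) (Fin κ) ℝ)
    (hcol : ∀ j, ∑ i, L i j = 1) :
    ∀ s : ℕ, 0 < s → ∀ j, ∑ i, (L ^ s) i j = 1 := by
  intro s
  induction s with
  | zero => omega
  | succ n ih =>
    intro _ j
    rcases Nat.eq_zero_or_pos n with h0 | hn
    · subst h0; simpa using hcol j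
    · have hprev := ih hn
      rw [pow_succ]
      simp only [Matrix.mul_apply]
      rw [Finset.sum_comm]
      calc ∑ k, ∑ i, (L ^ n) i k * L k j
          = ∑ k, (∑ i, (L ^ n) i k) * L k j := by
            simp [Finset.sum_mul]
        _ = ∑ k, L k j := by
            apply Finset.sum_congr rfl
            intro k _
            rw [hprev k, one_mul]
        _ = 1 := hcol j

/-- For a primitive column-stochastic matrix `L`, every column of the adjugate of
`M = L - I` is nonzero. -/
theorem stmt_2 (κ : ℕ) (hκ : 0 < κ) (L : Matrix (Fin κ) (Fin κ) ℝ)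
    (hnn : ∀ i j, 0 ≤ L i j) (hcol : ∀ j, ∑ i, L i j = 1)
    (hprim : ∃ s : ℕ, 0 < s ∧ ∀ i j, 0 < (L ^ s) i j) :
    ∀ j : Fin κ, (fun i => (L - 1).adjugate i j) ≠ 0 := by
  intro j hadj0
  set M : Matrix (Fin κ) (Fin κ) ℝ := L - 1 with hM
  have hadj : ∀ i, M.adjugate i j = 0 := fun i => congrFun hadj0 i
  -- columns of M sum to 0
  have hMcol : ∀ k, ∑ i, M i k = 0 := by
    intro k
    have h1 : ∑ i, (1 : Matrix (Fin κ) (Fin κ) ℝ) i k = 1 := by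
      simp [Matrix.one_apply]
    simp only [hM, Matrix.sub_apply, Finset.sum_sub_distrib, hcol k, h1, sub_self]
  -- N : M with row j replaced by all-ones row
  set N : Matrix (Fin κ) (Fin κ) ℝ := M.updateRow j (fun _ => (1:ℝ)) with hN
  -- det N = 0 by multilinearity and hadj
  have hdetN : N.det = 0 := by
    have hone : (fun _ => (1:ℝ)) = ∑ i : Fin κ, Pi.single i (1:ℝ) := by
      rw [Finset.univ_sum_single (fun _ => (1:ℝ))]
    calc N.det = Nᵀ.det := (Matrix.det_transpose N).symm
      _ = (Mᵀ.updateCol j (fun _ => (1:ℝ))).det := by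
            rw [hN, ← Matrix.updateCol_transpose]
      _ = Mᵀ.cramer (fun _ => (1:ℝ)) j := (Matrix.cramer_apply _ _ _).symm
      _ = ∑ i, Mᵀ.cramer (Pi.single i (1:ℝ)) j := by
            rw [hone, map_sum]
            simp
      _ = ∑ i, M.adjugate i j := by
            apply Finset.sum_congr rfl
            intro i _
            rw [Matrix.adjugate_def]
            rfl
      _ = 0 := by simp [hadj]
  -- so there is a nonzero null vector of N
  obtain ⟨v, hv0, hNv⟩ := (Matrix.exists_mulVec_eq_zero_iff).2 hdetN
  -- rows i ≠ j give (M v) i = 0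
  have hrow : ∀ i, i ≠ j → (M *ᵥ v) i = 0 := by
    intro i hij
    have h := congrFun hNv i
    simp only [hN, Matrix.mulVec, dotProduct, Matrix.updateRow_ne hij,
      Pi.zero_apply] at h
    simpa [Matrix.mulVec, dotProduct] using h
  -- row j gives ∑ v = 0
  have hsumv : ∑ k, v k = 0 := by
    have h := congrFun hNv j
    simpa [hN, Matrix.mulVec, dotProduct, Matrix.updateRow_self] using h
  -- total sum of (M v) is 0 since columns of M sum to 0
  have hsumMv : ∑ i, (M *ᵥ v) i = 0 := by
    simp only [Matrix.mulVec, dotProduct]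
    rw [Finset.sum_comm]
    apply Finset.sum_eq_zero
    intro k _
    rw [← Finset.sum_mul, hMcol k, zero_mul]
  -- hence also row j of (M v) is 0, so M v = 0
  have hMv : M *ᵥ v = 0 := by
    have hj : (M *ᵥ v) j = 0 := by
      have := Finset.sum_eq_single_of_mem j (Finset.mem_univ j)
        (fun i _ hij => hrow i hij)
      rw [← this, hsumMv]
    funext i
    by_cases hij : i = j
    · subst hij; exact hj
    · exact hrow i hij
  -- so v is a fixed vector of L
  have hLv : L *ᵥ v = v := by
    have h : (L - 1) *ᵥ v = L *ᵥ v - v := by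
      rw [Matrix.sub_mulVec, Matrix.one_mulVec]
    rw [hM, h] at hMv
    exact sub_eq_zero.mp hMv
  -- hence v is fixed by L ^ s
  obtain ⟨s, hs, hpos⟩ := hprim
  set A : Matrix (Fin κ) (Fin κ) ℝ := L ^ s with hA
  have hAv : A *ᵥ v = v := by
    rw [hA]
    clear hA hpos hs
    induction s with
    | zero => simp [Matrix.one_mulVec]
    | succ n ihn =>
      rw [pow_succ', ← Matrix.mulVec_mulVec, ihn, hLv]
  have hAcol : ∀ k, ∑ i, A i k = 1 := colsum_pow_aux L hcol s hs
  -- Perron-Frobenius equality argument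
  set w : Fin κ → ℝ := fun k => |v k| with hw
  have hle : ∀ i, |v i| ≤ ∑ k, A i k * w k := by
    intro i
    have hvi : v i = ∑ k, A i k * v k := by
      conv_lhs => rw [← hAv]
      rfl
    rw [hvi]
    refine le_trans (Finset.abs_sum_le_sum_abs _ _) ?_
    apply Finset.sum_le_sum
    intro k _
    rw [abs_mul, abs_of_pos (hpos i k)]
  have hsumEq : ∑ i, (∑ k, A i k * w k) = ∑ i, w i := by
    rw [Finset.sum_comm]
    apply Finset.sum_congr rfl
    intro k _
    rw [← Finset.sum_mul, hAcol k, one_mul]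
  have heq : ∀ i, ∑ k, A i k * w k = |v i| := by
    have hz : ∑ i, ((∑ k, A i k * w k) - |v i|) = 0 := by
      rw [Finset.sum_sub_distrib, hsumEq]
      simp [hw]
    intro i
    have := (Finset.sum_eq_zero_iff_of_nonneg
      (fun i _ => sub_nonneg.mpr (hle i))).mp hz i (Finset.mem_univ i)
    linarith [this]
  -- pick an index and derive a sign condition on v
  set i0 : Fin κ := ⟨0, hκ⟩ with hi0
  have hvi0 : v i0 = ∑ k, A i0 k * v k := by
    conv_lhs => rw [← hAv]
    rfl
  have hsign : (∀ k, 0 ≤ v k) ∨ (∀ k, v k ≤ 0) := by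
    rcases le_or_gt 0 (v i0) with hge | hlt
    · left
      have habs : |v i0| = v i0 := abs_of_nonneg hge
      have hz : ∑ k, A i0 k * (w k - v k) = 0 := by
        simp only [mul_sub, Finset.sum_sub_distrib]
        rw [heq i0, habs, ← hvi0, sub_self]
      intro k
      have := (Finset.sum_eq_zero_iff_of_nonneg (fun k _ =>
        mul_nonneg (le_of_lt (hpos i0 k))
          (sub_nonneg.mpr (le_abs_self (v k))))).mp hz k (Finset.mem_univ k)
      have h2 : w k - v k = 0 := by
        rcases mul_eq_zero.mp this with h | h
        · exact absurd h (ne_of_gt (hpos i0 k))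
        · exact h
      have : |v k| = v k := by simpa [hw] using sub_eq_zero.mp h2
      linarith [abs_nonneg (v k)]
    · right
      have habs : |v i0| = -v i0 := abs_of_neg hlt
      have hz : ∑ k, A i0 k * (w k + v k) = 0 := by
        simp only [mul_add, Finset.sum_add_distrib]
        rw [heq i0, habs, ← hvi0]
        ring
      intro k
      have := (Finset.sum_eq_zero_iff_of_nonneg (fun k _ =>
        mul_nonneg (le_of_lt (hpos i0 k))
          (by simp only [hw]; linarith [neg_abs_le (v k)] : (0:ℝ) ≤ w k + v k))).mp hz k
          (Finset.mem_univ k)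
      have h2 : w k + v k = 0 := by
        rcases mul_eq_zero.mp this with h | h
        · exact absurd h (ne_of_gt (hpos i0 k))
        · exact h
      have : |v k| = -v k := by simpa [hw, eq_neg_iff_add_eq_zero] using h2
      linarith [abs_nonneg (v k)]
  -- sign condition plus zero sum forces v = 0
  apply hv0
  funext k
  rcases hsign with hp | hn
  · exact (Finset.sum_eq_zero_iff_of_nonneg (fun k _ => hp k)).mp hsumv k
      (Finset.mem_univ k)
  · have hsum' : ∑ k, (-v k) = 0 := by
      rw [Finset.sum_neg_distrib, hsumv, neg_zero]
    have := (Finset.sum_eq_zero_iff_of_nonneg (fun k _ =>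
      neg_nonneg.mpr (hn k))).mp hsum' k (Finset.mem_univ k)
    simpa using neg_eq_zero.mp this
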